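/- For every integer k ≥ 0, the optimal value of problem (B) with budget k (i.e., the maximum of ∑_{b∈L} E(r_b,t_b) over assignments t : L → ℕ with ∑_{b∈L} t_b = k) equals the maximum of ∑_{b∈L} ∑_{j∈S_b} (1-p)·β_p(j,r_b) over all families (S_b)_{b∈L} of finite subsets of ℕ with ∑_{b∈L} |S_b| = k; that is, the optimal value is the sum of the largest k elements of the multiset ⨄_{b∈L} {(1-p)·β_p(j,r_b) : j ∈ ℕ}. -/

import Mathlib

/-- `betaP p t r = ∑_{i=0}^{r-1} C(t,i) (1-p)^i p^(t-i)`. -/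
noncomputable def betaP (p : ℝ) (t r : ℕ) : ℝ :=
  ∑ i ∈ Finset.range r, (t.choose i : ℝ) * (1 - p) ^ i * p ^ (t - i)

/-- Expected rank function `E(r,t) = ∑_{i=0}^{t} C(t,i) (1-p)^i p^(t-i) * min{i,r}`. -/
noncomputable def expRank (p : ℝ) (r t : ℕ) : ℝ :=
  ∑ i ∈ Finset.range (t + 1),
    (t.choose i : ℝ) * (1 - p) ^ i * p ^ (t - i) * ((min i r : ℕ) : ℝ)

lemma betaP_succ (p : ℝ) (t r : ℕ) :
    betaP p (t + 1) r = p * betaP p t r + (1 - p) * betaP p t (r - 1) := by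
  cases r with
  | zero => simp [betaP]
  | succ s =>
    simp only [betaP, Nat.succ_sub_one]
    rw [Finset.sum_range_succ' (fun i => (((t+1).choose i : ℝ)) * (1-p)^i * p^(t+1-i)) s,
        Finset.sum_range_succ' (fun i => ((t.choose i : ℝ)) * (1-p)^i * p^(t-i)) s]
    have key : ∀ i : ℕ, (((t+1).choose (i+1) : ℝ)) * (1-p)^(i+1) * p^(t+1-(i+1))
        = p * (((t.choose (i+1) : ℝ)) * (1-p)^(i+1) * p^(t-(i+1)))
          + (1-p) * (((t.choose i : ℝ)) * (1-p)^i * p^(t-i)) := by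
      intro i
      rcases lt_trichotomy i t with h | h | h
      · have h1 : t + 1 - (i+1) = t - i := by omega
        have h2 : t - i = (t - (i+1)) + 1 := by omega
        rw [Nat.choose_succ_succ, h1, h2]
        push_cast
        ring
      · subst h
        simp [Nat.choose_succ_self, Nat.choose_self]
        ring
      · have h1 : t < i + 1 := by omega
        simp [Nat.choose_eq_zero_of_lt h, Nat.choose_eq_zero_of_lt h1,
          Nat.choose_eq_zero_of_lt (by omega : t + 1 < i + 1)]
    rw [Finset.sum_congr rfl (fun i _ => key i)]
    rw [Finset.sum_add_distrib, ← Finset.mul_sum, ← Finset.mul_sum]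
    simp
    ring

lemma betaP_nonneg {p : ℝ} (hp0 : 0 ≤ p) (hp1 : p ≤ 1) (t r : ℕ) : 0 ≤ betaP p t r := by
  apply Finset.sum_nonneg
  intro i _
  have : (0:ℝ) ≤ 1 - p := by linarith
  positivity

lemma betaP_mono_r {p : ℝ} (hp0 : 0 ≤ p) (hp1 : p ≤ 1) (t : ℕ) {r r' : ℕ} (h : r ≤ r') :
    betaP p t r ≤ betaP p t r' := by
  apply Finset.sum_le_sum_of_subset_of_nonneg (Finset.range_subset_range.2 h)
  intro i _ _
  have : (0:ℝ) ≤ 1 - p := by linarith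
  positivity

lemma betaP_eq_sum_min (p : ℝ) (t m : ℕ) :
    betaP p t (m+1) = ∑ i ∈ Finset.range (min (t+1) (m+1)), (t.choose i:ℝ)*(1-p)^i*p^(t-i) := by
  rw [betaP]
  refine (Finset.sum_subset (Finset.range_subset_range.2 (min_le_right _ _)) ?_).symm
  intro x hx hx'
  simp only [Finset.mem_range, lt_min_iff, not_and] at hx hx'
  have : t < x := by omega
  simp [Nat.choose_eq_zero_of_lt this]

lemma sum_binom (p : ℝ) (t : ℕ) :
    ∑ i ∈ Finset.range (t+1), (t.choose i:ℝ)*(1-p)^i*p^(t-i) = 1 := by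
  calc ∑ i ∈ Finset.range (t+1), (t.choose i:ℝ)*(1-p)^i*p^(t-i)
      = ((1-p)+p)^t := by
        rw [add_pow]
        exact Finset.sum_congr rfl (fun i _ => by ring)
    _ = 1 := by norm_num

lemma expRank_rep (p : ℝ) (r t : ℕ) :
    expRank p r t = ∑ m ∈ Finset.range r, (1 - betaP p t (m+1)) := by
  have hmin : ∀ i : ℕ, ((min i r : ℕ) : ℝ) = ∑ m ∈ Finset.range r, (if m < i then (1:ℝ) else 0) := by
    intro i
    rw [Finset.sum_ite, Finset.sum_const, Finset.sum_const]
    have : (Finset.range r).filter (fun m => m < i) = Finset.range (min r i) := by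
      ext x; simp [lt_min_iff, and_comm]
    simp [this, min_comm]
  unfold expRank
  calc ∑ i ∈ Finset.range (t+1), (t.choose i:ℝ)*(1-p)^i*p^(t-i) * ((min i r : ℕ):ℝ)
      = ∑ i ∈ Finset.range (t+1), ∑ m ∈ Finset.range r,
          (if m < i then (t.choose i:ℝ)*(1-p)^i*p^(t-i) else 0) := by
        refine Finset.sum_congr rfl (fun i _ => ?_)
        rw [hmin, Finset.mul_sum]
        exact Finset.sum_congr rfl (fun m _ => by split <;> simp
        )
    _ = ∑ m ∈ Finset.range r, ∑ i ∈ Finset.range (t+1),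
          (if m < i then (t.choose i:ℝ)*(1-p)^i*p^(t-i) else 0) := Finset.sum_comm
    _ = ∑ m ∈ Finset.range r, (1 - betaP p t (m+1)) := by
        refine Finset.sum_congr rfl (fun m _ => ?_)
        have h1 : ∑ i ∈ Finset.range (t+1), (if m < i then (t.choose i:ℝ)*(1-p)^i*p^(t-i) else 0)
            = (∑ i ∈ Finset.range (t+1), (t.choose i:ℝ)*(1-p)^i*p^(t-i))
              - ∑ i ∈ Finset.range (t+1), (if i ≤ m then (t.choose i:ℝ)*(1-p)^i*p^(t-i) else 0) := by
          rw [← Finset.sum_sub_distrib]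
          refine Finset.sum_congr rfl (fun i _ => ?_)
          rcases le_or_gt i m with h | h
          · simp [h, not_lt.2 h]
          · simp [h, not_le.2 h]
        have h2 : ∑ i ∈ Finset.range (t+1), (if i ≤ m then (t.choose i:ℝ)*(1-p)^i*p^(t-i) else 0)
            = betaP p t (m+1) := by
          rw [betaP_eq_sum_min]
          simp only [← Nat.lt_succ_iff, ← Finset.mem_range]
          have hir : Finset.range (t+1) ∩ Finset.range (m+1) = Finset.range (min (t+1) (m+1)) := by
            ext x; simp [lt_min_iff]
          rw [Finset.sum_ite_mem, hir]
        rw [h1, h2, sum_binom]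

lemma betaP_anti {p : ℝ} (hp0 : 0 ≤ p) (hp1 : p ≤ 1) (r : ℕ) {t t' : ℕ} (h : t ≤ t') :
    betaP p t' r ≤ betaP p t r := by
  refine antitone_nat_of_succ_le (f := fun t => betaP p t r) (fun t => ?_) h
  show betaP p (t+1) r ≤ betaP p t r
  rw [betaP_succ]
  have h1 : betaP p t (r-1) ≤ betaP p t r := betaP_mono_r hp0 hp1 t (Nat.sub_le r 1)
  nlinarith [betaP_nonneg hp0 hp1 t r, betaP_nonneg hp0 hp1 t (r-1)]

lemma expRank_succ (p : ℝ) (r t : ℕ) :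
    expRank p r (t+1) = expRank p r t + (1 - p) * betaP p t r := by
  rw [expRank_rep, expRank_rep]
  have : ∀ m ∈ Finset.range r, (1 - betaP p (t+1) (m+1))
      = (1 - betaP p t (m+1)) + (1-p) * (betaP p t (m+1) - betaP p t m) := by
    intro m _
    rw [betaP_succ]
    simp only [Nat.add_sub_cancel]
    ring
  rw [Finset.sum_congr rfl this, Finset.sum_add_distrib, ← Finset.mul_sum,
    Finset.sum_range_sub (fun m => betaP p t m)]
  have h0 : betaP p t 0 = 0 := by simp [betaP]
  rw [h0]
  ring

lemma expRank_zero (p : ℝ) (r : ℕ) : expRank p r 0 = 0 := by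
  simp [expRank]

lemma expRank_eq (p : ℝ) (r t : ℕ) :
    expRank p r t = ∑ j ∈ Finset.range t, (1 - p) * betaP p j r := by
  induction t with
  | zero => simp [expRank_zero]
  | succ n ih => rw [expRank_succ, ih, Finset.sum_range_succ]

lemma sum_le_sum_range (f : ℕ → ℝ) (hf : ∀ a b, a ≤ b → f b ≤ f a) :
    ∀ n (T : Finset ℕ), T.card = n → ∑ j ∈ T, f j ≤ ∑ j ∈ Finset.range n, f j := by
  intro n
  induction n with
  | zero => intro T hT; simp [Finset.card_eq_zero.mp hT]
  | succ n ih =>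
    intro T hT
    have hne : T.Nonempty := by rw [← Finset.card_pos, hT]; omega
    set m := T.max' hne with hm
    have hmem : m ∈ T := T.max'_mem hne
    have hnm : n ≤ m := by
      by_contra h
      push_neg at h
      have hsub : T ⊆ Finset.range (m+1) :=
        fun x hx => Finset.mem_range.2 (Nat.lt_succ_of_le (T.le_max' x hx))
      have := Finset.card_le_card hsub
      rw [hT, Finset.card_range] at this
      omega
    have hs : ∑ j ∈ T, f j = f m + ∑ j ∈ T.erase m, f j :=
      (Finset.add_sum_erase _ _ hmem).symm
    rw [Finset.sum_range_succ, hs]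
    have h2 := ih (T.erase m) (by rw [Finset.card_erase_of_mem hmem, hT]; rfl)
    have h1 : f m ≤ f n := hf n m hnm
    linarith

theorem stmt14 {ι : Type*} (p : ℝ) (hp0 : 0 < p) (hp1 : p < 1)
    (L : Finset ι) (hL : L.Nonempty) (r : ι → ℕ) (k : ℕ) :
    ∃ v : ℝ,
      IsGreatest {x : ℝ | ∃ t : ι → ℕ, (∑ b ∈ L, t b) = k ∧
        x = ∑ b ∈ L, expRank p (r b) (t b)} v ∧
      IsGreatest {x : ℝ | ∃ S : ι → Finset ℕ, (∑ b ∈ L, (S b).card) = k ∧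
        x = ∑ b ∈ L, ∑ j ∈ S b, (1 - p) * betaP p j (r b)} v := by
  have hp0' : (0:ℝ) ≤ p := le_of_lt hp0
  have hp1' : p ≤ 1 := le_of_lt hp1
  classical
  set S1 : Set ℝ := {x : ℝ | ∃ t : ι → ℕ, (∑ b ∈ L, t b) = k ∧
    x = ∑ b ∈ L, expRank p (r b) (t b)} with hS1
  -- S1 is finite
  have hbd : ∀ t : ι → ℕ, (∑ b ∈ L, t b) = k → ∀ b ∈ L, t b ≤ k := by
    intro t ht b hb
    rw [← ht]
    exact Finset.single_le_sum (fun _ _ => Nat.zero_le _) hb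
  set e : (↥L → Fin (k+1)) → (ι → ℕ) := fun g b => if h : b ∈ L then (g ⟨b, h⟩ : ℕ) else 0 with he
  have hfin : S1.Finite := by
    apply Set.Finite.subset (Set.finite_range
      (fun g : ↥L → Fin (k+1) => ∑ b ∈ L, expRank p (r b) (e g b)))
    rintro x ⟨t, ht, rfl⟩
    refine ⟨fun b => ⟨t b.1, Nat.lt_succ_of_le (hbd t ht b.1 b.2)⟩, ?_⟩
    refine Finset.sum_congr rfl (fun b hb => ?_)
    simp [he, hb]
  have hne : S1.Nonempty := by
    obtain ⟨b0, hb0⟩ := hL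
    refine ⟨∑ b ∈ L, expRank p (r b) (if b = b0 then k else 0),
      fun b => if b = b0 then k else 0, ?_, rfl⟩
    rw [Finset.sum_ite_eq' L b0 (fun _ => k)]
    simp [hb0]
  obtain ⟨v, hvmem, hvub⟩ : ∃ v, v ∈ S1 ∧ ∀ x ∈ S1, x ≤ v := by
    have h1 : hfin.toFinset.Nonempty := by rwa [Set.Finite.toFinset_nonempty]
    exact ⟨hfin.toFinset.max' h1, hfin.mem_toFinset.mp (hfin.toFinset.max'_mem h1),
      fun x hx => hfin.toFinset.le_max' x (hfin.mem_toFinset.mpr hx)⟩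
  have hIG1 : IsGreatest S1 v := ⟨hvmem, hvub⟩
  refine ⟨v, hIG1, ?_, ?_⟩
  · -- v ∈ S2
    obtain ⟨t, ht, hv⟩ := hvmem
    refine ⟨fun b => Finset.range (t b), by simpa using ht, ?_⟩
    rw [hv]
    exact Finset.sum_congr rfl (fun b _ => expRank_eq p (r b) (t b))
  · -- upper bound for S2
    rintro x ⟨S, hS, rfl⟩
    have step : ∀ b ∈ L, ∑ j ∈ S b, (1 - p) * betaP p j (r b)
        ≤ expRank p (r b) ((S b).card) := by
      intro b _
      rw [expRank_eq]
      refine sum_le_sum_range (fun j => (1 - p) * betaP p j (r b)) ?_ _ _ rfl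
      intro a c hac
      exact mul_le_mul_of_nonneg_left (betaP_anti hp0' hp1' (r b) hac) (by linarith)
    calc ∑ b ∈ L, ∑ j ∈ S b, (1 - p) * betaP p j (r b)
        ≤ ∑ b ∈ L, expRank p (r b) ((S b).card) := Finset.sum_le_sum step
      _ ≤ v := hvub _ ⟨fun b => (S b).card, hS, rfl⟩
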